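/- For every n ≥ 1, the taxi walk connective constant satisfies μ_taxi ≥ b_n^{1/n}. -/

import Mathlib

open Filter

/-- The oriented step relation of the Manhattan lattice. -/
def taxiStep (u v : ℤ × ℤ) : Prop :=
  (Even u.2 ∧ v = (u.1 + 1, u.2)) ∨
  (Odd u.2 ∧ v = (u.1 - 1, u.2)) ∨
  (Even u.1 ∧ v = (u.1, u.2 + 1)) ∨
  (Odd u.1 ∧ v = (u.1, u.2 - 1))

/-- Perpendicularity of two step vectors. -/
def perp (d e : ℤ × ℤ) : Prop := d.1 * e.1 + d.2 * e.2 = 0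

instance (d e : ℤ × ℤ) : Decidable (perp d e) := by unfold perp; infer_instance

/-- The walk `l` turns at its `i`-th vertex (meaningful for `1 ≤ i ≤ l.length - 2`). -/
def turnAt (l : List (ℤ × ℤ)) (i : ℕ) : Prop :=
  perp (l.getD i 0 - l.getD (i - 1) 0) (l.getD (i + 1) 0 - l.getD i 0)

instance (l : List (ℤ × ℤ)) (i : ℕ) : Decidable (turnAt l i) := by
  unfold turnAt; infer_instance

/-- A taxi walk, recorded as its list of vertices (a walk of length `n` has `n + 1` vertices). -/
def IsTaxiWalk (l : List (ℤ × ℤ)) : Prop :=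
  l ≠ [] ∧ l.Nodup ∧
  (∀ i, i + 1 < l.length → taxiStep (l.getD i 0) (l.getD (i + 1) 0)) ∧
  (∀ i, 1 ≤ i → i + 2 < l.length → ¬(turnAt l i ∧ turnAt l (i + 1)))

/-- The set of taxi walks of length `n` starting at the origin. -/
def originWalks (n : ℕ) : Set (List (ℤ × ℤ)) :=
  {l | IsTaxiWalk l ∧ l.length = n + 1 ∧ l.getD 0 0 = 0}

/-- `taxiCount n` is `c_n`, the number of taxi walks of length `n` starting at the origin. -/
noncomputable def taxiCount (n : ℕ) : ℕ := (originWalks n).ncard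

/-- The turn-word of a walk: `true` (the letter `t`) where the walk turns,
`false` (the letter `s`) where it goes straight. -/
def turnWord (l : List (ℤ × ℤ)) : List Bool :=
  (List.range (l.length - 2)).map fun i => decide (turnAt l (i + 1))

/-- The encoding of a taxi walk starting at the origin: the first coordinate is `true`
(for `N`) if `v₁ = (0,1)` and `false` (for `E`) if `v₁ = (1,0)`; the second is the turn-word. -/
def encode (l : List (ℤ × ℤ)) : Bool × List Bool :=
  (decide (l.getD 1 0 = (0, 1)), turnWord l)

/-- A bridge: a taxi walk from `(0,0)` to `(1,0)` staying at abscissa `≥ 1` after the start,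
whose last step is horizontal and ends at maximal abscissa. -/
def IsBridge (l : List (ℤ × ℤ)) : Prop :=
  IsTaxiWalk l ∧ 2 ≤ l.length ∧ l.getD 0 0 = (0, 0) ∧ l.getD 1 0 = (1, 0) ∧
  (∀ i, 1 ≤ i → i < l.length → 1 ≤ (l.getD i 0).1) ∧
  (l.getD (l.length - 1) 0).2 = (l.getD (l.length - 2) 0).2 ∧
  (∀ i, i < l.length → (l.getD i 0).1 ≤ (l.getD (l.length - 1) 0).1)

/-- `bridgeCount n` is `b_n`, the number of bridges of length `n`, with `b_0 = 1`. -/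
noncomputable def bridgeCount : ℕ → ℕ
  | 0 => 1
  | n + 1 => {l : List (ℤ × ℤ) | IsBridge l ∧ l.length = n + 2}.ncard

/-- The normalizing symmetry `f_{(x,y)}` of the oriented Manhattan lattice. -/
def normMap (p : ℤ × ℤ) (q : ℤ × ℤ) : ℤ × ℤ :=
  if Even p.1 then
    (if Even p.2 then (q.1 - p.1, q.2 - p.2) else (-(q.1 - p.1), q.2 - p.2))
  else
    (if Even p.2 then (q.1 - p.1, -(q.2 - p.2)) else (-(q.1 - p.1), -(q.2 - p.2)))

/-- The vertex `v_i` is a cutvertex of the bridge `l`. -/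
def IsCutAt (l : List (ℤ × ℤ)) (i : ℕ) : Prop :=
  0 < i ∧ i + 1 < l.length ∧
  IsBridge (l.take (i + 1)) ∧
  l.getD (i + 1) 0 = l.getD i 0 + (1, 0) ∧
  IsBridge ((l.drop i).map (normMap (l.getD i 0)))

/-- An irreducible bridge: a bridge with no cutvertex. -/
def IsIrreducibleBridge (l : List (ℤ × ℤ)) : Prop :=
  IsBridge l ∧ ∀ i, ¬ IsCutAt l i

/-- `irrBridgeCount n` is `a_n`, the number of irreducible bridges of length `n`, with `a_0 = 0`. -/
noncomputable def irrBridgeCount : ℕ → ℕ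
  | 0 => 0
  | n + 1 => {l : List (ℤ × ℤ) | IsIrreducibleBridge l ∧ l.length = n + 2}.ncard

/-! ### Helpers -/

/-- Inverse of `normMap p`. -/
def denorm (p r : ℤ × ℤ) : ℤ × ℤ :=
  (p.1 + (if Even p.2 then r.1 else -r.1), p.2 + (if Even p.1 then r.2 else -r.2))

lemma denorm_injective (p : ℤ × ℤ) : Function.Injective (denorm p) := by
  intro u v h
  unfold denorm at h
  rw [Prod.ext_iff] at h ⊢
  simp only at h
  split_ifs at h <;> omega

lemma denorm_zero (p : ℤ × ℤ) : denorm p (0, 0) = p := by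
  unfold denorm; split_ifs <;> simp

lemma denorm_fst (p : ℤ × ℤ) (hp : Even p.2) (r : ℤ × ℤ) :
    (denorm p r).1 = p.1 + r.1 := by
  simp [denorm, hp]

lemma denorm_snd_sub (p : ℤ × ℤ) {u v : ℤ × ℤ} (h : u.2 = v.2) :
    (denorm p u).2 = (denorm p v).2 := by
  simp only [denorm]
  split_ifs <;> omega

lemma denorm_step (p : ℤ × ℤ) {u v : ℤ × ℤ} (h : taxiStep u v) :
    taxiStep (denorm p u) (denorm p v) := by
  obtain ⟨p1, p2⟩ := p; obtain ⟨u1, u2⟩ := u; obtain ⟨v1, v2⟩ := v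
  simp only [taxiStep, denorm, Int.even_iff, Int.odd_iff, Prod.mk.injEq] at h ⊢
  rcases Int.emod_two_eq p1 with h1 | h1 <;> rcases Int.emod_two_eq p2 with h2 | h2 <;>
    simp only [h1, h2, reduceIte] <;>
    rcases h with ⟨ha, hb, hc⟩ | ⟨ha, hb, hc⟩ | ⟨ha, hb, hc⟩ | ⟨ha, hb, hc⟩ <;>
    first
    | exact Or.inl ⟨by omega, by omega, by omega⟩
    | exact Or.inr (Or.inl ⟨by omega, by omega, by omega⟩)
    | exact Or.inr (Or.inr (Or.inl ⟨by omega, by omega, by omega⟩))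
    | exact Or.inr (Or.inr (Or.inr ⟨by omega, by omega, by omega⟩))

lemma perp_denorm (p u v w x : ℤ × ℤ) :
    perp (denorm p u - denorm p v) (denorm p w - denorm p x) ↔ perp (u - v) (w - x) := by
  simp only [perp, denorm, Prod.fst_sub, Prod.snd_sub]
  split_ifs <;> constructor <;> intro h <;> linear_combination h

lemma getD_map_denorm (p : ℤ × ℤ) (l : List (ℤ × ℤ)) {i : ℕ} (hi : i < l.length) :
    (l.map (denorm p)).getD i 0 = denorm p (l.getD i 0) := by
  rw [List.getD_eq_getElem _ _ (by simpa using hi), List.getD_eq_getElem _ _ hi, List.getElem_map]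

lemma getD_take' (l : List (ℤ × ℤ)) {m i : ℕ} (hi : i < m) (hm : m ≤ l.length) :
    (l.take m).getD i 0 = l.getD i 0 := by
  have hi' : i < (l.take m).length := by simp; omega
  rw [List.getD_eq_getElem _ _ hi', List.getD_eq_getElem _ _ (by omega)]
  exact (List.getElem_take' (by omega) hi).symm

/-- The last step of a bridge goes East, and the last vertex has even ordinate. -/
lemma IsBridge.last_step {l : List (ℤ × ℤ)} (h : IsBridge l) :
    Even (l.getD (l.length - 1) 0).2 ∧
      l.getD (l.length - 1) 0 = l.getD (l.length - 2) 0 + (1, 0) := by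
  obtain ⟨⟨hne, hnd, hstep, hturn⟩, hlen, h0, h1, hpos, hy, hmax⟩ := h
  have hs := hstep (l.length - 2) (by omega)
  have h2 : l.length - 2 + 1 = l.length - 1 := by omega
  rw [h2] at hs
  have hmax' := hmax (l.length - 2) (by omega)
  set a := l.getD (l.length - 2) 0 with ha
  set b := l.getD (l.length - 1) 0 with hb
  rcases hs with ⟨he, hv⟩ | ⟨ho, hv⟩ | ⟨he, hv⟩ | ⟨ho, hv⟩
  · rw [hv]; refine ⟨by simpa using he, ?_⟩; rw [Prod.ext_iff]; simp
  · exfalso; rw [hv] at hmax'; simp at hmax'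
  · exfalso; rw [hv] at hy; simp at hy
  · exfalso; rw [hv] at hy; simp at hy

/-! ### Gluing bridges -/

/-- Concatenation of two bridges. -/
def glue (l₁ l₂ : List (ℤ × ℤ)) : List (ℤ × ℤ) :=
  l₁.dropLast ++ l₂.map (denorm (l₁.getD (l₁.length - 1) 0))

section GlueLemmas

variable {l₁ l₂ : List (ℤ × ℤ)} {m n : ℕ}

lemma glue_length (h1 : l₁.length = m + 1) (h2 : l₂.length = n + 1) :
    (glue l₁ l₂).length = m + n + 1 := by
  simp [glue, h1, h2]; omega

lemma glue_getD_lt (h1 : l₁.length = m + 1) {i : ℕ} (hi : i < m) :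
    (glue l₁ l₂).getD i 0 = l₁.getD i 0 := by
  rw [glue, List.getD_append _ _ _ _ (by simp [h1]; omega), List.dropLast_eq_take,
    getD_take' _ (by omega) (by omega)]

lemma glue_getD_ge (h1 : l₁.length = m + 1) (h2 : l₂.length = n + 1)
    {i : ℕ} (him : m ≤ i) (hi : i ≤ m + n) :
    (glue l₁ l₂).getD i 0 = denorm (l₁.getD m 0) (l₂.getD (i - m) 0) := by
  rw [glue, List.getD_append_right _ _ _ _ (by simp [h1]; omega)]
  have : l₁.dropLast.length = m := by simp [h1]
  rw [this, h1, Nat.add_sub_cancel, getD_map_denorm _ _ (by omega)]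

lemma glue_getD_le (h1 : l₁.length = m + 1) (h2 : l₂.length = n + 1)
    (h20 : l₂.getD 0 0 = (0, 0)) {i : ℕ} (hi : i ≤ m) :
    (glue l₁ l₂).getD i 0 = l₁.getD i 0 := by
  rcases lt_or_eq_of_le hi with h | h
  · exact glue_getD_lt h1 h
  · subst h
    rw [glue_getD_ge h1 h2 le_rfl (by omega), Nat.sub_self, h20, denorm_zero]

end GlueLemmas

lemma glue_isBridge {l₁ l₂ : List (ℤ × ℤ)} {m n : ℕ} (hm : 1 ≤ m) (hn : 1 ≤ n)
    (hb1 : IsBridge l₁) (h1 : l₁.length = m + 1)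
    (hb2 : IsBridge l₂) (h2 : l₂.length = n + 1) :
    IsBridge (glue l₁ l₂) ∧ (glue l₁ l₂).length = m + n + 1 := by
  have hlast1 := hb1.last_step
  obtain ⟨⟨hne1, hnd1, hstep1, hturn1⟩, hlen1, h10, h11, hpos1, hy1, hmax1⟩ := hb1
  obtain ⟨⟨hne2, hnd2, hstep2, hturn2⟩, hlen2, h20, h21, hpos2, hy2, hmax2⟩ := hb2
  simp only [h1, h2, Nat.add_sub_cancel] at hlast1 hmax1 hy1 hmax2 hy2
  have hm1 : m + 1 - 2 = m - 1 := by omega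
  have hn1 : n + 1 - 2 = n - 1 := by omega
  rw [hm1] at hlast1 hy1
  rw [hn1] at hy2
  set p : ℤ × ℤ := l₁.getD m 0 with hp
  obtain ⟨hE, hL⟩ := hlast1
  set L : List (ℤ × ℤ) := glue l₁ l₂ with hLdef
  have hLen : L.length = m + n + 1 := glue_length h1 h2
  have A : ∀ i ≤ m, L.getD i 0 = l₁.getD i 0 := fun i hi => glue_getD_le h1 h2 h20 hi
  have B : ∀ i, m ≤ i → i ≤ m + n → L.getD i 0 = denorm p (l₂.getD (i - m) 0) :=
    fun i him hi => glue_getD_ge h1 h2 him hi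
  have hp1 : 1 ≤ p.1 := hpos1 m hm (by omega)
  -- steps
  have hstepL : ∀ i, i + 1 < L.length → taxiStep (L.getD i 0) (L.getD (i + 1) 0) := by
    intro i hi
    rw [hLen] at hi
    by_cases hc : i + 1 ≤ m
    · rw [A i (by omega), A (i + 1) hc]
      exact hstep1 i (by omega)
    · rw [B i (by omega) (by omega), B (i + 1) (by omega) (by omega)]
      have he : i + 1 - m = (i - m) + 1 := by omega
      rw [he]
      exact denorm_step _ (hstep2 (i - m) (by omega))
  -- nodup
  have hd : ∀ i < m, ∀ j ≤ n, l₁.getD i 0 ≠ denorm p (l₂.getD j 0) := by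
    intro i hi j hj heq
    rcases Nat.eq_zero_or_pos j with rfl | hj1
    · rw [h20, denorm_zero] at heq
      have hgi : l₁.getD i 0 = l₁.get ⟨i, by omega⟩ := List.getD_eq_get _ _ ⟨i, by omega⟩
      have hgm : p = l₁.get ⟨m, by omega⟩ := List.getD_eq_get _ _ ⟨m, by omega⟩
      rw [hgi, hgm] at heq
      have := (List.Nodup.get_inj_iff hnd1).1 heq
      simp at this; omega
    · have hx1 : (l₁.getD i 0).1 ≤ p.1 := hmax1 i (by omega)
      have hx2 : 1 ≤ (l₂.getD j 0).1 := hpos2 j hj1 (by omega)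
      have hxd : (denorm p (l₂.getD j 0)).1 = p.1 + (l₂.getD j 0).1 := denorm_fst p hE _
      rw [heq] at hx1
      omega
  have hndL : L.Nodup := by
    rw [hLdef, glue]
    apply List.Nodup.append
    · exact (List.dropLast_sublist l₁).nodup hnd1
    · exact hnd2.map (denorm_injective _)
    · intro a ha hb
      obtain ⟨⟨i, hi⟩, rfl⟩ := List.mem_iff_get.1 ha
      obtain ⟨c, hc, hceq⟩ := List.mem_map.1 hb
      obtain ⟨⟨j, hj⟩, rfl⟩ := List.mem_iff_get.1 hc
      have hi' : i < m := by simpa [h1] using hi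
      have hj' : j ≤ n := by
        have := hj; rw [h2] at this; omega
      have e1 : l₁.dropLast.get ⟨i, hi⟩ = l₁.getD i 0 := by
        rw [List.get_eq_getElem, List.getElem_dropLast, List.getD_eq_getElem]
      have e2 : l₂.get ⟨j, hj⟩ = l₂.getD j 0 := (List.getD_eq_get _ _ ⟨j, hj⟩).symm
      rw [e1, e2] at hceq
      rw [h1, Nat.add_sub_cancel, ← hp] at hceq
      exact hd i hi' j hj' hceq.symm
  -- junction is straight
  have hv1 : L.getD m 0 - L.getD (m - 1) 0 = (1, 0) := by
    rw [A m le_rfl, A (m - 1) (by omega), ← hp, hL, Prod.ext_iff]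
    simp
  have hdenorm10 : denorm p (1, 0) = (p.1 + 1, p.2) := by simp [denorm, hE]
  have hv2 : L.getD (m + 1) 0 - L.getD m 0 = (1, 0) := by
    rw [B (m + 1) (by omega) (by omega), B m le_rfl (by omega), Nat.sub_self,
      show m + 1 - m = 1 from by omega, h21, h20, denorm_zero, hdenorm10, Prod.ext_iff]
    simp
  have hTm : ¬ turnAt L m := by
    unfold turnAt
    rw [hv1, hv2]
    unfold perp
    simp
  -- turn transfer
  have hT1 : ∀ k, 1 ≤ k → k + 1 ≤ m → (turnAt L k ↔ turnAt l₁ k) := by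
    intro k hk hk'
    unfold turnAt
    rw [A k (by omega), A (k - 1) (by omega), A (k + 1) (by omega)]
  have hT2 : ∀ k, m + 1 ≤ k → k + 1 ≤ m + n → (turnAt L k ↔ turnAt l₂ (k - m)) := by
    intro k hk hk'
    unfold turnAt
    rw [B k (by omega) (by omega), B (k - 1) (by omega) (by omega),
      B (k + 1) (by omega) (by omega),
      show k - 1 - m = k - m - 1 from by omega, show k + 1 - m = k - m + 1 from by omega]
    exact perp_denorm _ _ _ _ _
  have hturnL : ∀ i, 1 ≤ i → i + 2 < L.length → ¬(turnAt L i ∧ turnAt L (i + 1)) := by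
    intro i hi1 hi2
    rw [hLen] at hi2
    rcases lt_trichotomy (i + 1) m with hc | hc | hc
    · rw [hT1 i hi1 (by omega), hT1 (i + 1) (by omega) (by omega)]
      exact hturn1 i hi1 (by omega)
    · rintro ⟨-, t⟩; rw [hc] at t; exact hTm t
    · by_cases hc2 : i = m
      · rintro ⟨t, -⟩; rw [hc2] at t; exact hTm t
      · rw [hT2 i (by omega) (by omega), hT2 (i + 1) (by omega) (by omega),
          show i + 1 - m = (i - m) + 1 from by omega]
        exact hturn2 (i - m) (by omega) (by omega)
  refine ⟨⟨⟨?_, hndL, hstepL, hturnL⟩, by omega, ?_, ?_, ?_, ?_, ?_⟩, hLen⟩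
  · intro h; rw [h] at hLen; simp at hLen
  · rw [A 0 (by omega)]; exact h10
  · rw [A 1 hm]; exact h11
  · intro i hi hi'
    rw [hLen] at hi'
    by_cases hc : i ≤ m
    · rw [A i hc]; exact hpos1 i hi (by omega)
    · rw [B i (by omega) (by omega), denorm_fst p hE]
      have := hpos2 (i - m) (by omega) (by omega)
      omega
  · rw [hLen, show m + n + 1 - 1 = m + n from by omega, show m + n + 1 - 2 = m + n - 1 from by omega,
      B (m + n) (by omega) le_rfl, B (m + n - 1) (by omega) (by omega),
      show m + n - m = n from by omega, show m + n - 1 - m = n - 1 from by omega]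
    exact denorm_snd_sub p hy2
  · intro i hi
    rw [hLen] at hi
    rw [hLen, show m + n + 1 - 1 = m + n from by omega, B (m + n) (by omega) le_rfl,
      show m + n - m = n from by omega, denorm_fst p hE]
    have hxn : 1 ≤ (l₂.getD n 0).1 := hpos2 n hn (by omega)
    by_cases hc : i ≤ m
    · rw [A i hc]
      have := hmax1 i (by omega)
      omega
    · rw [B i (by omega) (by omega), denorm_fst p hE]
      have := hmax2 (i - m) (by omega)
      omega

/-! ### Counting -/

def BSet (k : ℕ) : Set (List (ℤ × ℤ)) := {l | IsBridge l ∧ l.length = k + 1}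

lemma bridgeCount_eq {k : ℕ} (hk : 1 ≤ k) : bridgeCount k = (BSet k).ncard := by
  obtain ⟨j, rfl⟩ : ∃ j, k = j + 1 := ⟨k - 1, by omega⟩
  rfl

lemma BSet_subset (k : ℕ) : BSet k ⊆ originWalks k := by
  rintro l ⟨⟨hw, -, h0, -⟩, hlen⟩
  exact ⟨hw, hlen, by rw [h0]; rfl⟩

lemma list_ext_getD {l l' : List (ℤ × ℤ)} (h : l.length = l'.length)
    (hg : ∀ i < l.length, l.getD i 0 = l'.getD i 0) : l = l' := by
  apply List.ext_get h
  intro i hi1 hi2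
  rw [← List.getD_eq_get l 0 ⟨i, hi1⟩, ← List.getD_eq_get l' 0 ⟨i, hi2⟩]
  exact hg i hi1

lemma finite_fixedLength {K : Set (ℤ × ℤ)} (hK : K.Finite) (N : ℕ) :
    {l : List (ℤ × ℤ) | l.length = N ∧ ∀ i < N, l.getD i 0 ∈ K}.Finite := by
  apply Set.Finite.of_finite_image (f := fun l => fun i : Fin N => l.getD i 0)
  · apply Set.Finite.subset (Set.Finite.pi fun _ : Fin N => hK)
    rintro g ⟨l, ⟨hlen, hmem⟩, rfl⟩
    rw [Set.mem_univ_pi]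
    exact fun i => hmem i i.2
  · rintro l ⟨hl, -⟩ l' ⟨hl', -⟩ h
    refine list_ext_getD (by omega) fun i hi => ?_
    exact congrFun h ⟨i, by omega⟩

lemma originWalks_bound {k : ℕ} {l : List (ℤ × ℤ)} (hl : l ∈ originWalks k) :
    ∀ i < l.length, -(i : ℤ) ≤ (l.getD i 0).1 ∧ (l.getD i 0).1 ≤ i ∧
      -(i : ℤ) ≤ (l.getD i 0).2 ∧ (l.getD i 0).2 ≤ i := by
  obtain ⟨⟨-, -, hstep, -⟩, hlen, h0⟩ := hl
  intro i
  induction i with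
  | zero => intro _; rw [h0]; simp
  | succ i ih =>
    intro hi
    have hb := ih (by omega)
    have hs := hstep i (by omega)
    push_cast
    rcases hs with ⟨-, hv⟩ | ⟨-, hv⟩ | ⟨-, hv⟩ | ⟨-, hv⟩ <;> rw [hv] <;> dsimp only <;>
      refine ⟨by omega, by omega, by omega, by omega⟩

lemma originWalks_finite (k : ℕ) : (originWalks k).Finite := by
  have hK : ((Set.Icc (-(k : ℤ)) k) ×ˢ (Set.Icc (-(k : ℤ)) k)).Finite :=
    (Set.finite_Icc _ _).prod (Set.finite_Icc _ _)
  apply Set.Finite.subset (finite_fixedLength hK (k + 1))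
  intro l hl
  have hlen : l.length = k + 1 := hl.2.1
  refine ⟨hlen, fun i hi => ?_⟩
  have := originWalks_bound hl i (by omega)
  constructor <;> rw [Set.mem_Icc] <;> constructor <;> omega

lemma ncard_prod_eq {α β : Type*} (s : Set α) (t : Set β) :
    (s ×ˢ t).ncard = s.ncard * t.ncard := by
  rw [← Nat.card_coe_set_eq, ← Nat.card_coe_set_eq, ← Nat.card_coe_set_eq,
    ← Nat.card_prod]
  exact Nat.card_congr (Equiv.Set.prod s t)

lemma glue_injOn {m n : ℕ} :
    Set.InjOn (fun q : List (ℤ × ℤ) × List (ℤ × ℤ) => glue q.1 q.2) (BSet m ×ˢ BSet n) := by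
  rintro ⟨a, b⟩ ⟨⟨hba, hla⟩, hbb, hlb⟩ ⟨a', b'⟩ ⟨⟨hba', hla'⟩, hbb', hlb'⟩ heq
  simp only at heq
  dsimp only at hba hla hbb hlb hba' hla' hbb' hlb'
  have hb0 : b.getD 0 0 = (0, 0) := hbb.2.2.1
  have hb0' : b'.getD 0 0 = (0, 0) := hbb'.2.2.1
  have ea : a = a' := by
    refine list_ext_getD (by omega) fun i hi => ?_
    rw [← glue_getD_le hla hlb hb0 (by omega), heq,
      glue_getD_le hla' hlb' hb0' (by omega)]
  have ep : a.getD m 0 = a'.getD m 0 := by rw [ea]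
  have eb : b = b' := by
    refine list_ext_getD (by omega) fun j hj => ?_
    apply denorm_injective (a.getD m 0)
    have e1 := glue_getD_ge (l₁ := a) (l₂ := b) hla hlb (Nat.le_add_right m j) (by omega)
    have e2 := glue_getD_ge (l₁ := a') (l₂ := b') hla' hlb' (Nat.le_add_right m j) (by omega)
    rw [show m + j - m = j from by omega] at e1 e2
    rw [← e1, heq, e2, ← ep]
  rw [ea, eb]

lemma bridge_supermul {m n : ℕ} (hm : 1 ≤ m) (hn : 1 ≤ n) :
    bridgeCount m * bridgeCount n ≤ bridgeCount (m + n) := by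
  rw [bridgeCount_eq hm, bridgeCount_eq hn, bridgeCount_eq (by omega)]
  have hfin : (BSet (m + n)).Finite := (originWalks_finite (m + n)).subset (BSet_subset _)
  have himg : (fun q : List (ℤ × ℤ) × List (ℤ × ℤ) => glue q.1 q.2) '' (BSet m ×ˢ BSet n)
      ⊆ BSet (m + n) := by
    rintro - ⟨⟨a, b⟩, ⟨ha, hb⟩, rfl⟩
    exact glue_isBridge hm hn ha.1 ha.2 hb.1 hb.2
  calc (BSet m).ncard * (BSet n).ncard = (BSet m ×ˢ BSet n).ncard := (ncard_prod_eq _ _).symm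
    _ = ((fun q : List (ℤ × ℤ) × List (ℤ × ℤ) => glue q.1 q.2) '' (BSet m ×ˢ BSet n)).ncard :=
        (Set.ncard_image_of_injOn glue_injOn).symm
    _ ≤ (BSet (m + n)).ncard := Set.ncard_le_ncard himg hfin

lemma bridge_pow {k : ℕ} (hk : 1 ≤ k) : ∀ j, 1 ≤ j → bridgeCount k ^ j ≤ bridgeCount (k * j) := by
  intro j
  induction j with
  | zero => omega
  | succ j ih =>
    intro _
    rcases Nat.eq_zero_or_pos j with rfl | hj
    · simp
    · calc bridgeCount k ^ (j + 1) = bridgeCount k ^ j * bridgeCount k := pow_succ _ _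
        _ ≤ bridgeCount (k * j) * bridgeCount k := Nat.mul_le_mul_right _ (ih hj)
        _ ≤ bridgeCount (k * j + k) := bridge_supermul (Nat.mul_pos hk hj) hk
        _ = bridgeCount (k * (j + 1)) := by ring_nf

lemma bridge_le_taxi {k : ℕ} (hk : 1 ≤ k) : bridgeCount k ≤ taxiCount k := by
  rw [bridgeCount_eq hk]
  exact Set.ncard_le_ncard (BSet_subset k) (originWalks_finite k)

/-- For every `n ≥ 1`, the taxi walk connective constant
`μ_taxi = lim_{n→∞} c_n^{1/n}` satisfies `μ_taxi ≥ b_n^{1/n}`. -/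
theorem muTaxi_ge_bridge_root (μ : ℝ)
    (hμ : Filter.Tendsto (fun n : ℕ => (taxiCount n : ℝ) ^ ((1 : ℝ) / (n : ℝ)))
      Filter.atTop (nhds μ))
    (n : ℕ) (hn : 1 ≤ n) :
    (bridgeCount n : ℝ) ^ ((1 : ℝ) / (n : ℝ)) ≤ μ := by
  have hmono : Filter.Tendsto (fun k : ℕ => n * k) atTop atTop :=
    Filter.tendsto_atTop_atTop.2 fun b =>
      ⟨b, fun k hk => le_trans hk (Nat.le_mul_of_pos_left k (by omega))⟩
  have hsub := hμ.comp hmono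
  refine ge_of_tendsto hsub ?_
  filter_upwards [Filter.eventually_ge_atTop 1] with k hk
  simp only [Function.comp]
  have h1 : (bridgeCount n : ℝ) ^ (k : ℕ) ≤ (taxiCount (n * k) : ℝ) := by
    exact_mod_cast le_trans (bridge_pow hn k hk) (bridge_le_taxi (Nat.mul_pos hn hk))
  have hb0 : (0 : ℝ) ≤ (bridgeCount n : ℝ) := by positivity
  have h2 := Real.rpow_le_rpow (by positivity) h1
    (show (0 : ℝ) ≤ 1 / ((n * k : ℕ) : ℝ) by positivity)
  rw [← Real.rpow_natCast (bridgeCount n : ℝ) k, ← Real.rpow_mul hb0] at h2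
  have he : (k : ℝ) * (1 / ((n * k : ℕ) : ℝ)) = 1 / (n : ℝ) := by
    have hk0 : (k : ℝ) ≠ 0 := by positivity
    have hn0 : (n : ℝ) ≠ 0 := by positivity
    push_cast
    field_simp
  rw [he] at h2
  exact h2
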